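/- arXiv:1911.04050 — 3 statements merged into one kernel-verified Lean document; each statement's English description precedes it below -/
import Mathlib

section
/- Let h(ξ) = ∑_{|α|≤m} c_α (iξ)^α be a strongly elliptic symbol of even order m on ℝ^d. Then there exist constants λ > 0 and σ, ω ≥ 0 such that Re h(ξ + iη) ≥ λ|ξ|^m − σ|η|^m − ω for all ξ, η ∈ ℝ^d, where h is extended to ℂ^d as a polynomial. -/
open Finset

lemma young_ab (m a b : ℕ) (ha : a < m) (hab : a + b ≤ m) (ε : ℝ) (hε : 0 < ε) :
    ∃ C, 0 ≤ C ∧ ∀ u v : ℝ, 0 ≤ u → 0 ≤ v →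
      u ^ a * v ^ b ≤ ε * u ^ m + C * v ^ m + C := by
  set K : ℝ := max 1 ε⁻¹ with hK
  have hK1 : (1:ℝ) ≤ K := le_max_left _ _
  have hK0 : (0:ℝ) < K := lt_of_lt_of_le one_pos hK1
  have hKε : ε⁻¹ ≤ K := le_max_right _ _
  refine ⟨K ^ m * 2 ^ m, by positivity, ?_⟩
  intro u v hu hv
  rcases le_total u (K * (v + 1)) with h | h
  · -- small u case
    have h1 : u ^ a * v ^ b ≤ (K * (v+1)) ^ a * (v+1) ^ b := by
      apply mul_le_mul (pow_le_pow_left₀ hu h a) (pow_le_pow_left₀ hv (by linarith) b)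
        (by positivity) (by positivity)
    have h2 : (K * (v+1)) ^ a * (v+1) ^ b = K ^ a * (v+1) ^ (a+b) := by
      rw [mul_pow, pow_add]; ring
    have h3 : (v+1) ^ (a+b) ≤ (v+1) ^ m :=
      pow_le_pow_right₀ (by linarith) hab
    have h4 : K ^ a ≤ K ^ m := pow_le_pow_right₀ hK1 (le_of_lt ha)
    have h5 : (v+1) ^ m ≤ 2 ^ m * (v ^ m + 1) := by
      rcases le_total v 1 with hv1 | hv1
      · have : (v+1) ^ m ≤ 2 ^ m := pow_le_pow_left₀ (by linarith) (by linarith) m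
        nlinarith [pow_nonneg hv m, pow_nonneg (by norm_num : (0:ℝ) ≤ 2) m]
      · have : (v+1) ^ m ≤ (2*v) ^ m := pow_le_pow_left₀ (by linarith) (by linarith) m
        rw [mul_pow] at this
        nlinarith [pow_nonneg (by norm_num : (0:ℝ) ≤ 2) m, pow_nonneg hv m,
          pow_pos (lt_of_lt_of_le one_pos hv1) m]
    have hεu : 0 ≤ ε * u ^ m := by positivity
    calc u ^ a * v ^ b ≤ K ^ a * (v+1) ^ (a+b) := by rw [← h2]; exact h1
      _ ≤ K ^ m * (v+1) ^ m := by
          apply mul_le_mul h4 h3 (by positivity) (by positivity)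
      _ ≤ K ^ m * (2 ^ m * (v ^ m + 1)) := by
          apply mul_le_mul_of_nonneg_left h5 (by positivity)
      _ = K ^ m * 2 ^ m * v ^ m + K ^ m * 2 ^ m := by ring
      _ ≤ ε * u ^ m + K ^ m * 2 ^ m * v ^ m + K ^ m * 2 ^ m := by linarith
  · -- large u case: K*(v+1) ≤ u
    have hKv : K * v ≤ u := by nlinarith
    have hKu : K ≤ u := by nlinarith
    have key : u ^ a * v ^ b * K ^ (m - a) ≤ u ^ m := by
      have hsplit : m = a + b + (m - a - b) := by omega
      have hKm : K ^ (m - a) = K ^ b * K ^ (m - a - b) := by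
        rw [← pow_add]; congr 1; omega
      calc u ^ a * v ^ b * K ^ (m-a) = u ^ a * ((K*v) ^ b * K ^ (m-a-b)) := by
            rw [hKm, mul_pow]; ring
        _ ≤ u ^ a * (u ^ b * u ^ (m-a-b)) := by
            apply mul_le_mul_of_nonneg_left _ (by positivity)
            apply mul_le_mul (pow_le_pow_left₀ (by positivity) hKv b)
              (pow_le_pow_left₀ (le_of_lt hK0) hKu _) (by positivity) (by positivity)
        _ = u ^ m := by rw [← pow_add, ← pow_add]; congr 1; omega
    have hεK : 1 ≤ ε * K ^ (m - a) := by
      have h1 : K ≤ K ^ (m - a) := by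
        calc K = K ^ 1 := (pow_one K).symm
          _ ≤ K ^ (m - a) := pow_le_pow_right₀ hK1 (by omega)
      calc (1:ℝ) = ε * ε⁻¹ := by field_simp
        _ ≤ ε * K ^ (m-a) := by
            apply mul_le_mul_of_nonneg_left (le_trans hKε h1) (le_of_lt hε)
    have huv : 0 ≤ u ^ a * v ^ b := by positivity
    have : u ^ a * v ^ b ≤ ε * u ^ m := by
      calc u ^ a * v ^ b = u ^ a * v ^ b * 1 := (mul_one _).symm
        _ ≤ u ^ a * v ^ b * (ε * K ^ (m-a)) := mul_le_mul_of_nonneg_left hεK huv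
        _ = ε * (u ^ a * v ^ b * K ^ (m-a)) := by ring
        _ ≤ ε * u ^ m := mul_le_mul_of_nonneg_left key (le_of_lt hε)
    have : 0 ≤ K ^ m * 2 ^ m * v ^ m + K ^ m * 2 ^ m := by positivity
    linarith

lemma finsum_young (m : ℕ) {ι : Type*} [DecidableEq ι] (s : Finset ι) (a b : ι → ℕ)
    (ha : ∀ i ∈ s, a i < m) (hab : ∀ i ∈ s, a i + b i ≤ m) (ε : ℝ) (hε : 0 < ε) :
    ∃ σ, 0 ≤ σ ∧ ∃ ω, 0 ≤ ω ∧ ∀ u v : ℝ, 0 ≤ u → 0 ≤ v →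
      ∑ i ∈ s, u ^ a i * v ^ b i ≤ ε * u ^ m + σ * v ^ m + ω := by
  have hε' : 0 < ε / (s.card + 1) := by positivity
  choose C hC0 hC using fun i : {i // i ∈ s} =>
    young_ab m (a i) (b i) (ha i i.2) (hab i i.2) _ hε'
  refine ⟨∑ i ∈ s.attach, C i, Finset.sum_nonneg fun i _ => hC0 i,
    ∑ i ∈ s.attach, C i, Finset.sum_nonneg fun i _ => hC0 i, ?_⟩
  intro u v hu hv
  rw [← Finset.sum_attach s]
  calc ∑ i ∈ s.attach, u ^ a i * v ^ b i
      ≤ ∑ i ∈ s.attach, (ε / (s.card + 1) * u ^ m + C i * v ^ m + C i) :=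
        Finset.sum_le_sum fun i _ => hC i u v hu hv
    _ = s.card * (ε / (s.card + 1) * u ^ m) + (∑ i ∈ s.attach, C i) * v ^ m
        + ∑ i ∈ s.attach, C i := by
        rw [Finset.sum_add_distrib, Finset.sum_add_distrib, Finset.sum_const,
          Finset.card_attach, ← Finset.sum_mul, nsmul_eq_mul]
    _ ≤ ε * u ^ m + (∑ i ∈ s.attach, C i) * v ^ m + ∑ i ∈ s.attach, C i := by
        have hum : 0 ≤ u ^ m := by positivity
        have h1 : (s.card : ℝ) * (ε / (s.card + 1)) ≤ ε := by
          rw [mul_div_assoc']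
          rw [div_le_iff₀ (by positivity)]
          nlinarith [Nat.cast_nonneg (α := ℝ) s.card]
        nlinarith [mul_le_mul_of_nonneg_right h1 hum]

lemma coord_le_norm {d : ℕ} (x : EuclideanSpace ℝ (Fin d)) (i : Fin d) : |x i| ≤ ‖x‖ := by
  rw [EuclideanSpace.norm_eq]
  rw [show |x i| = Real.sqrt (|x i| ^ 2) by rw [Real.sqrt_sq_eq_abs, abs_abs]]
  apply Real.sqrt_le_sqrt
  rw [sq_abs]
  have := Finset.single_le_sum (f := fun j => ‖x j‖ ^ 2)
    (fun j _ => by positivity) (Finset.mem_univ i)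
  simpa [Real.norm_eq_abs, sq_abs] using this


open scoped BigOperators

/-- The polynomial symbol `h(z) = ∑_{|α| ≤ m} c_α (iz)^α` on `ℂ^d`, where a multi-index
`α` of length `n` is a function `Fin n → Fin d` and `(iz)^α = ∏ j (i z_{α j})`. -/
noncomputable def ellipticSymbolC (d m : ℕ) (c : (n : ℕ) → (Fin n → Fin d) → ℂ)
    (z : Fin d → ℂ) : ℂ :=
  ∑ n ∈ Finset.range (m + 1), ∑ α : Fin n → Fin d,
    c n α * ∏ j, (Complex.I * z (α j))

theorem stmt7 (d m : ℕ) (hm : 0 < m) (hme : Even m)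
    (c : (n : ℕ) → (Fin n → Fin d) → ℂ) (μ : ℝ) (hμ : 0 < μ)
    (hell : ∀ ξ : EuclideanSpace ℝ (Fin d),
      μ * ‖ξ‖ ^ m ≤
        ((-1 : ℂ) ^ (m / 2) *
          ∑ α : Fin m → Fin d, c m α * ∏ j, (ξ (α j) : ℂ)).re) :
    ∃ lam > (0 : ℝ), ∃ σ ≥ (0 : ℝ), ∃ ω ≥ (0 : ℝ),
      ∀ ξ η : EuclideanSpace ℝ (Fin d),
        lam * ‖ξ‖ ^ m - σ * ‖η‖ ^ m - ω ≤
          (ellipticSymbolC d m c (fun i => (ξ i : ℂ) + Complex.I * (η i : ℂ))).re := by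
  classical
  set A : ℕ → ℝ := fun n => ∑ α : Fin n → Fin d, ‖c n α‖ with hAdef
  set S : (n : ℕ) → Finset (Finset (Fin n)) := fun n =>
    if n = m then ((Finset.univ : Finset (Fin n)).powerset).erase Finset.univ
    else if n < m then (Finset.univ : Finset (Fin n)).powerset else ∅ with hSdef
  have hA0 : ∀ n, 0 ≤ A n := fun n => Finset.sum_nonneg fun α _ => norm_nonneg _
  have hScard : ∀ n, ∀ t ∈ S n, t.card < m ∧ t.card + (n - t.card) ≤ m := by
    intro n t ht
    rw [hSdef] at ht
    by_cases hn : n = m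
    · subst hn
      simp only [eq_self_iff_true, if_true, Finset.mem_erase, Finset.mem_powerset] at ht
      have hss : t ⊂ Finset.univ := ht.2.ssubset_of_ne ht.1
      have hcard : t.card < n := by
        have := Finset.card_lt_card hss
        simpa [Finset.card_univ] using this
      exact ⟨hcard, by omega⟩
    · by_cases hn2 : n < m
      · simp only [if_neg hn, if_pos hn2, Finset.mem_powerset] at ht
        have : t.card ≤ n := by
          have := Finset.card_le_card ht
          simpa [Finset.card_univ] using this
        exact ⟨by omega, by omega⟩
      · simp [if_neg hn, if_neg hn2] at ht
  have hε0 : 0 < μ / (2 * (m + 1)) := by positivity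
  have key : ∀ n : ℕ, ∃ σ, 0 ≤ σ ∧ ∃ ω, 0 ≤ ω ∧ ∀ u v : ℝ, 0 ≤ u → 0 ≤ v →
      A n * ∑ t ∈ S n, u ^ t.card * v ^ (n - t.card) ≤
        μ / (2 * (m + 1)) * u ^ m + σ * v ^ m + ω := by
    intro n
    have hε' : 0 < μ / (2 * (m + 1)) / (A n + 1) := by
      have := hA0 n; positivity
    obtain ⟨σ', hσ', ω', hω', hb⟩ := finsum_young m (S n) Finset.card
      (fun t => n - t.card) (fun t ht => (hScard n t ht).1)
      (fun t ht => (hScard n t ht).2) _ hε'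
    refine ⟨A n * σ', mul_nonneg (hA0 n) hσ', A n * ω', mul_nonneg (hA0 n) hω', ?_⟩
    intro u v hu hv
    have h1 := mul_le_mul_of_nonneg_left (hb u v hu hv) (hA0 n)
    have h2 : A n * (μ / (2 * (m + 1)) / (A n + 1)) ≤ μ / (2 * (m + 1)) := by
      rw [mul_div_assoc']
      rw [div_le_iff₀ (by have := hA0 n; positivity)]
      nlinarith [hA0 n, hε0.le]
    have hum : (0:ℝ) ≤ u ^ m := by positivity
    nlinarith [mul_le_mul_of_nonneg_right h2 hum]
  choose σf hσf ωf hωf hkey using key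
  refine ⟨μ / 2, by positivity, ∑ n ∈ Finset.range (m+1), σf n,
    Finset.sum_nonneg fun n _ => hσf n, ∑ n ∈ Finset.range (m+1), ωf n,
    Finset.sum_nonneg fun n _ => hωf n, ?_⟩
  intro ξ η
  set z : Fin d → ℂ := fun i => (ξ i : ℂ) + Complex.I * (η i : ℂ) with hzdef
  set u := ‖ξ‖ with hudef
  set v := ‖η‖ with hvdef
  have hu : 0 ≤ u := norm_nonneg _
  have hv : 0 ≤ v := norm_nonneg _
  set W : (n : ℕ) → (Fin n → Fin d) → Finset (Fin n) → ℂ := fun n α t =>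
    (∏ j ∈ t, (Complex.I * (ξ (α j) : ℂ))) * ∏ j ∈ Finset.univ \ t, (-(η (α j) : ℂ))
    with hWdef
  have hprod : ∀ (n : ℕ) (α : Fin n → Fin d),
      ∏ j, (Complex.I * z (α j)) = ∑ t ∈ (Finset.univ : Finset (Fin n)).powerset, W n α t := by
    intro n α
    have h : ∀ j : Fin n, Complex.I * z (α j) =
        Complex.I * (ξ (α j) : ℂ) + (-(η (α j) : ℂ)) := by
      intro j
      simp only [hzdef]
      rw [mul_add, ← mul_assoc, Complex.I_mul_I]
      ring
    rw [Finset.prod_congr rfl (fun j _ => h j), Finset.prod_add]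
  have hIm : Complex.I ^ m = (-1 : ℂ) ^ (m / 2) := by
    obtain ⟨k, hk⟩ := hme
    subst hk
    rw [show k + k = 2 * k by ring, pow_mul, Complex.I_sq,
      show 2 * k / 2 = k by omega]
  have hWuniv : ∀ α : Fin m → Fin d,
      W m α Finset.univ = (-1 : ℂ) ^ (m / 2) * ∏ j, (ξ (α j) : ℂ) := by
    intro α
    rw [hWdef]
    simp only [Finset.sdiff_self, Finset.prod_empty, mul_one]
    rw [Finset.prod_mul_distrib, Finset.prod_const, Finset.card_univ,
      Fintype.card_fin, hIm]
  have expand : ellipticSymbolC d m c z =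
      ((-1 : ℂ) ^ (m / 2) * ∑ α : Fin m → Fin d, c m α * ∏ j, (ξ (α j) : ℂ))
      + ∑ n ∈ Finset.range (m+1), ∑ α : Fin n → Fin d, c n α * ∑ t ∈ S n, W n α t := by
    unfold ellipticSymbolC
    rw [Finset.sum_range_succ, Finset.sum_range_succ]
    have hlow : ∀ n ∈ Finset.range m,
        (∑ α : Fin n → Fin d, c n α * ∏ j, (Complex.I * z (α j))) =
        ∑ α : Fin n → Fin d, c n α * ∑ t ∈ S n, W n α t := by
      intro n hn
      rw [Finset.mem_range] at hn
      refine Finset.sum_congr rfl fun α _ => ?_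
      rw [hprod n α, hSdef]
      simp only [if_neg (Nat.ne_of_lt hn), if_pos hn]
    rw [Finset.sum_congr rfl hlow]
    have htop : (∑ α : Fin m → Fin d, c m α * ∏ j, (Complex.I * z (α j))) =
        ((-1 : ℂ) ^ (m / 2) * ∑ α : Fin m → Fin d, c m α * ∏ j, (ξ (α j) : ℂ))
        + ∑ α : Fin m → Fin d, c m α * ∑ t ∈ S m, W m α t := by
      have hsplit : ∀ α : Fin m → Fin d,
          (∑ t ∈ (Finset.univ : Finset (Fin m)).powerset, W m α t) =
          W m α Finset.univ + ∑ t ∈ S m, W m α t := by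
        intro α
        rw [hSdef]
        simp only [eq_self_iff_true, if_true]
        rw [← Finset.add_sum_erase _ _ (Finset.mem_powerset_self _)]
      calc (∑ α : Fin m → Fin d, c m α * ∏ j, (Complex.I * z (α j)))
          = ∑ α : Fin m → Fin d, (c m α * W m α Finset.univ
            + c m α * ∑ t ∈ S m, W m α t) := by
            refine Finset.sum_congr rfl fun α _ => ?_
            rw [hprod m α, hsplit α, mul_add]
        _ = (∑ α : Fin m → Fin d, c m α * W m α Finset.univ)
            + ∑ α : Fin m → Fin d, c m α * ∑ t ∈ S m, W m α t :=
            Finset.sum_add_distrib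
        _ = ((-1 : ℂ) ^ (m / 2) * ∑ α : Fin m → Fin d, c m α * ∏ j, (ξ (α j) : ℂ))
            + ∑ α : Fin m → Fin d, c m α * ∑ t ∈ S m, W m α t := by
            congr 1
            rw [Finset.mul_sum]
            refine Finset.sum_congr rfl fun α _ => ?_
            rw [hWuniv α]; ring
    rw [htop]; ring
  have hWabs : ∀ (n : ℕ) (α : Fin n → Fin d) (t : Finset (Fin n)),
      ‖W n α t‖ ≤ u ^ t.card * v ^ (n - t.card) := by
    intro n α t
    rw [hWdef]
    rw [norm_mul, norm_prod, norm_prod]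
    have h1 : ∀ j ∈ t, ‖Complex.I * (ξ (α j) : ℂ)‖ ≤ u := by
      intro j _
      rw [norm_mul, Complex.norm_I, one_mul, Complex.norm_real, Real.norm_eq_abs]
      exact coord_le_norm ξ (α j)
    have h2 : ∀ j ∈ Finset.univ \ t, ‖-(η (α j) : ℂ)‖ ≤ v := by
      intro j _
      rw [norm_neg, Complex.norm_real, Real.norm_eq_abs]
      exact coord_le_norm η (α j)
    have hb1 : (∏ j ∈ t, ‖Complex.I * (ξ (α j) : ℂ)‖) ≤ u ^ t.card := by
      calc (∏ j ∈ t, ‖Complex.I * (ξ (α j) : ℂ)‖)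
          ≤ ∏ _j ∈ t, u := Finset.prod_le_prod (fun j _ => norm_nonneg _) h1
        _ = u ^ t.card := Finset.prod_const u
    have hb2 : (∏ j ∈ Finset.univ \ t, ‖-(η (α j) : ℂ)‖) ≤ v ^ (n - t.card) := by
      calc (∏ j ∈ Finset.univ \ t, ‖-(η (α j) : ℂ)‖)
          ≤ ∏ _j ∈ Finset.univ \ t, v :=
            Finset.prod_le_prod (fun j _ => norm_nonneg _) h2
        _ = v ^ (Finset.univ \ t).card := Finset.prod_const v
        _ = v ^ (n - t.card) := by rw [Finset.card_univ_diff, Fintype.card_fin]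
    exact mul_le_mul hb1 hb2 (Finset.prod_nonneg fun j _ => norm_nonneg _)
      (by positivity)
  set T : ℕ → ℝ := fun n => ∑ t ∈ S n, u ^ t.card * v ^ (n - t.card) with hTdef
  have hEbound : ‖∑ n ∈ Finset.range (m+1),
      ∑ α : Fin n → Fin d, c n α * ∑ t ∈ S n, W n α t‖ ≤
      ∑ n ∈ Finset.range (m+1), A n * T n := by
    calc ‖∑ n ∈ Finset.range (m+1),
        ∑ α : Fin n → Fin d, c n α * ∑ t ∈ S n, W n α t‖
        ≤ ∑ n ∈ Finset.range (m+1), ‖∑ α : Fin n → Fin d, c n α * ∑ t ∈ S n, W n α t‖ :=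
          norm_sum_le _ _
      _ ≤ ∑ n ∈ Finset.range (m+1), A n * T n := by
          refine Finset.sum_le_sum fun n _ => ?_
          calc ‖∑ α : Fin n → Fin d, c n α * ∑ t ∈ S n, W n α t‖
              ≤ ∑ α : Fin n → Fin d, ‖c n α * ∑ t ∈ S n, W n α t‖ :=
                norm_sum_le _ _
            _ ≤ ∑ α : Fin n → Fin d, ‖c n α‖ * T n := by
                refine Finset.sum_le_sum fun α _ => ?_
                rw [norm_mul]
                refine mul_le_mul_of_nonneg_left ?_ (norm_nonneg _)
                calc ‖∑ t ∈ S n, W n α t‖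
                    ≤ ∑ t ∈ S n, ‖W n α t‖ :=
                      norm_sum_le _ _
                  _ ≤ T n := Finset.sum_le_sum fun t _ => hWabs n α t
            _ = A n * T n := by rw [← Finset.sum_mul]
  have hT0 : ∀ n, 0 ≤ T n :=
    fun n => Finset.sum_nonneg fun t _ => by positivity
  rw [expand, Complex.add_re]
  have h1 := hell ξ
  have h2 : -(∑ n ∈ Finset.range (m+1), A n * T n) ≤
      (∑ n ∈ Finset.range (m+1), ∑ α : Fin n → Fin d,
        c n α * ∑ t ∈ S n, W n α t).re := by
    have ha1 := Complex.abs_re_le_norm (∑ n ∈ Finset.range (m+1),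
      ∑ α : Fin n → Fin d, c n α * ∑ t ∈ S n, W n α t)
    have ha2 := neg_abs_le (∑ n ∈ Finset.range (m+1),
      ∑ α : Fin n → Fin d, c n α * ∑ t ∈ S n, W n α t).re
    linarith [hEbound]
  have h3 : ∑ n ∈ Finset.range (m+1), A n * T n ≤
      ∑ n ∈ Finset.range (m+1), (μ / (2 * (m + 1)) * u ^ m + σf n * v ^ m + ωf n) :=
    Finset.sum_le_sum fun n _ => hkey n u v hu hv
  have h4 : ∑ n ∈ Finset.range (m+1), (μ / (2 * (m + 1)) * u ^ m + σf n * v ^ m + ωf n)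
      = μ / 2 * u ^ m
        + (∑ n ∈ Finset.range (m+1), σf n) * v ^ m
        + ∑ n ∈ Finset.range (m+1), ωf n := by
    rw [Finset.sum_add_distrib, Finset.sum_add_distrib, Finset.sum_const,
      Finset.card_range, ← Finset.sum_mul, nsmul_eq_mul]
    have hne : ((m:ℝ)+1) ≠ 0 := by positivity
    field_simp
    push_cast
    ring
  linarith
end

section
/- Let K : ℝ^d → ℂ satisfy the Gaussian bound |K(x)| ≤ a t^{−(d+k)/m} e^{ω t} e^{−b(|x|^m/t)^{1/(m−1)}} for fixed t > 0 and constants a, b > 0, ω ≥ 0, m > 1, k ≥ 0. Then for every ρ ≥ 0, ∫_{ℝ^d} |K(x)| e^{ρ|x|} dx ≤ a' t^{−k/m} e^{ω'(1+ρ^m)t} for constants a', ω' > 0 depending only on a, b, ω, m, d, k. -/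
open MeasureTheory

lemma aux_integrable (d : ℕ) {c p : ℝ} (hc : 0 < c) (hp : 1 ≤ p) :
    Integrable (fun x : EuclideanSpace ℝ (Fin d) => Real.exp (-c * ‖x‖ ^ p)) := by
  have hd : (Module.finrank ℝ (EuclideanSpace ℝ (Fin d)) : ℝ) < (d : ℝ) + 1 := by
    rw [finrank_euclideanSpace_fin]; norm_num
  set C : ℝ := Real.exp (2 * c) * (Nat.factorial (d + 1) : ℝ) / c ^ (d + 1) with hC
  refine ((integrable_one_add_norm (μ := volume) hd).const_mul C).mono'
    (Measurable.aestronglyMeasurable (by fun_prop)) (Filter.Eventually.of_forall fun x => ?_)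
  have hr : (0 : ℝ) ≤ ‖x‖ := norm_nonneg x
  set r : ℝ := ‖x‖ with hrdef
  have h1 : r - 1 ≤ r ^ p := by
    rcases le_or_gt 1 r with h | h
    · calc r - 1 ≤ r := by linarith
        _ = r ^ (1 : ℝ) := (Real.rpow_one r).symm
        _ ≤ r ^ p := Real.rpow_le_rpow_of_exponent_le h hp
    · have : (0 : ℝ) ≤ r ^ p := Real.rpow_nonneg hr p
      linarith
  have h2 : Real.exp (-c * r ^ p) ≤ Real.exp (c - c * r) := by
    apply Real.exp_le_exp.2; nlinarith
  have hfac : (0 : ℝ) < (Nat.factorial (d + 1) : ℝ) := by positivity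
  have hcp : (0 : ℝ) < c ^ (d + 1) := by positivity
  have h3 : (c * (1 + r)) ^ (d + 1) / (Nat.factorial (d + 1) : ℝ) ≤ Real.exp (c * (1 + r)) :=
    Real.pow_div_factorial_le_exp (x := c * (1 + r)) (by positivity) (d + 1)
  have h4 : (1 + r) ^ (d + 1) ≤ (Nat.factorial (d + 1) : ℝ) / c ^ (d + 1) * Real.exp (c * (1 + r)) := by
    rw [div_mul_eq_mul_div, le_div_iff₀ hcp]
    rw [div_le_iff₀ hfac] at h3
    calc (1 + r) ^ (d + 1) * c ^ (d + 1) = (c * (1 + r)) ^ (d + 1) := by rw [mul_pow]; ring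
      _ ≤ Real.exp (c * (1 + r)) * (Nat.factorial (d + 1) : ℝ) := h3
      _ = (Nat.factorial (d + 1) : ℝ) * Real.exp (c * (1 + r)) := by ring
  have h5 : Real.exp (c - c * r) * (1 + r) ^ (d + 1) ≤ C := by
    have he : Real.exp (c - c * r) = Real.exp (2 * c) / Real.exp (c * (1 + r)) := by
      rw [eq_div_iff (Real.exp_ne_zero _), ← Real.exp_add]; ring_nf
    rw [he, hC]
    calc Real.exp (2 * c) / Real.exp (c * (1 + r)) * (1 + r) ^ (d + 1)
        ≤ Real.exp (2 * c) / Real.exp (c * (1 + r)) *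
            ((Nat.factorial (d + 1) : ℝ) / c ^ (d + 1) * Real.exp (c * (1 + r))) := by
          exact mul_le_mul_of_nonneg_left h4 (by positivity)
      _ = Real.exp (2 * c) * (Nat.factorial (d + 1) : ℝ) / c ^ (d + 1) := by
          field_simp
  have hpow : (1 + r) ^ (-((d : ℝ) + 1)) = ((1 + r) ^ (d + 1) : ℝ)⁻¹ := by
    rw [show -((d : ℝ) + 1) = -(((d + 1 : ℕ) : ℝ)) by push_cast; ring,
      Real.rpow_neg (by positivity), Real.rpow_natCast]
  have hpos : (0 : ℝ) < (1 + r) ^ (d + 1) := by positivity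
  calc ‖Real.exp (-c * r ^ p)‖ = Real.exp (-c * r ^ p) := Real.norm_of_nonneg (Real.exp_pos _).le
    _ ≤ Real.exp (c - c * r) := h2
    _ ≤ C * (1 + r) ^ (-((d : ℝ) + 1)) := by
        rw [hpow, ← div_eq_mul_inv, le_div_iff₀ hpos]; exact h5

lemma aux_young {b m : ℝ} (hb : 0 < b) (hm : 1 < m) :
    ∃ c > (0 : ℝ), ∀ u, 0 ≤ u → ∀ v, 0 ≤ v →
      u * v ≤ b * v ^ (m / (m - 1)) + c * u ^ m := by
  set q : ℝ := m / (m - 1) with hqdef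
  have hpq : m.HolderConjugate q := Real.HolderConjugate.conjExponent hm
  have hq0 : 0 < q := hpq.symm.pos
  have hbq : (0 : ℝ) < b * q := by positivity
  set l : ℝ := (b * q) ^ (-1 / q) with hldef
  have hl0 : 0 < l := Real.rpow_pos_of_pos hbq _
  have hm0 : (0 : ℝ) < m := hpq.pos
  refine ⟨l ^ m / m, by positivity, fun u hu v hv => ?_⟩
  have key := Real.young_inequality_of_nonneg (mul_nonneg hl0.le hu) (div_nonneg hv hl0.le) hpq
  have h1 : (l * u) ^ m = l ^ m * u ^ m := Real.mul_rpow hl0.le hu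
  have h2 : (v / l) ^ q = v ^ q / l ^ q := Real.div_rpow hv hl0.le _
  have h3 : l ^ q = (b * q)⁻¹ := by
    rw [hldef, ← Real.rpow_mul hbq.le,
      show -1 / q * q = -1 by field_simp, Real.rpow_neg_one]
  have huv : u * v = (l * u) * (v / l) := by field_simp
  rw [h1, h2, h3] at key
  have h4 : v ^ q / (b * q)⁻¹ / q = b * v ^ q := by
    field_simp
  rw [h4] at key
  rw [huv]
  calc (l * u) * (v / l) ≤ l ^ m * u ^ m / m + b * v ^ q := key
    _ = b * v ^ q + (l ^ m / m) * u ^ m := by ring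

lemma aux_scale {m : ℝ} (hm : 1 < m) {t : ℝ} (ht : 0 < t) {r : ℝ} (hr : 0 ≤ r) :
    (r * t ^ (-(1 / m))) ^ (m / (m - 1)) = (r ^ m / t) ^ (1 / (m - 1)) := by
  have hm0 : m ≠ 0 := by positivity
  have hm1 : m - 1 ≠ 0 := ne_of_gt (by linarith)
  have htm : (0 : ℝ) ≤ t ^ (-(1 / m)) := (Real.rpow_pos_of_pos ht _).le
  rw [Real.mul_rpow hr htm, Real.div_rpow (Real.rpow_nonneg hr m) ht.le,
    ← Real.rpow_mul ht.le, ← Real.rpow_mul hr,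
    show -(1 / m) * (m / (m - 1)) = -(1 / (m - 1)) by field_simp,
    show m * (1 / (m - 1)) = m / (m - 1) by ring,
    Real.rpow_neg ht.le]
  ring

lemma aux_key {b m : ℝ} (hb : 0 < b) (hm : 1 < m) :
    ∃ c > (0 : ℝ), ∀ t > (0 : ℝ), ∀ ρ ≥ (0 : ℝ), ∀ r ≥ (0 : ℝ),
      ρ * r ≤ b * ((r ^ m / t) ^ (1 / (m - 1))) + c * ρ ^ m * t := by
  obtain ⟨c, hc, hy⟩ := aux_young hb hm
  have hm0 : (0 : ℝ) < m := by linarith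
  refine ⟨c, hc, fun t ht ρ hρ r hr => ?_⟩
  set u : ℝ := ρ * t ^ (1 / m) with hu
  set v : ℝ := r * t ^ (-(1 / m)) with hv
  have htp : (0 : ℝ) < t ^ (1 / m) := Real.rpow_pos_of_pos ht _
  have htp' : (0 : ℝ) < t ^ (-(1 / m)) := Real.rpow_pos_of_pos ht _
  have hu0 : 0 ≤ u := mul_nonneg hρ htp.le
  have hv0 : 0 ≤ v := mul_nonneg hr htp'.le
  have hone : t ^ (1 / m) * t ^ (-(1 / m)) = 1 := by
    rw [← Real.rpow_add ht]; norm_num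
  have huv : u * v = ρ * r := by
    calc u * v = ρ * r * (t ^ (1 / m) * t ^ (-(1 / m))) := by rw [hu, hv]; ring
      _ = ρ * r := by rw [hone, mul_one]
  have hum : u ^ m = ρ ^ m * t := by
    rw [hu, Real.mul_rpow hρ htp.le, ← Real.rpow_mul ht.le,
      show 1 / m * m = 1 by field_simp, Real.rpow_one]
  have hvq : v ^ (m / (m - 1)) = (r ^ m / t) ^ (1 / (m - 1)) := aux_scale hm ht hr
  have := hy u hu0 v hv0
  rw [huv, hum, hvq] at this
  calc ρ * r ≤ b * (r ^ m / t) ^ (1 / (m - 1)) + c * (ρ ^ m * t) := this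
    _ = b * (r ^ m / t) ^ (1 / (m - 1)) + c * ρ ^ m * t := by ring

theorem stmt10 (d : ℕ) (a b ω m k : ℝ)
    (ha : 0 < a) (hb : 0 < b) (hω : 0 ≤ ω) (hm : 1 < m) (hk : 0 ≤ k) :
    ∃ a' > (0 : ℝ), ∃ ω' > (0 : ℝ), ∀ t > (0 : ℝ),
      ∀ K : EuclideanSpace ℝ (Fin d) → ℂ,
        (∀ x, ‖K x‖ ≤ a * t ^ (-(((d : ℝ) + k) / m)) * Real.exp (ω * t) *
          Real.exp (-b * ((‖x‖ ^ m / t) ^ (1 / (m - 1))))) →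
        ∀ ρ ≥ (0 : ℝ),
          ∫ x : EuclideanSpace ℝ (Fin d), ‖K x‖ * Real.exp (ρ * ‖x‖) ≤
            a' * t ^ (-(k / m)) * Real.exp (ω' * (1 + ρ ^ m) * t) := by
  have hm0 : (0 : ℝ) < m := by linarith
  have hmne : m ≠ 0 := hm0.ne'
  have hm1 : m - 1 ≠ 0 := ne_of_gt (by linarith)
  have hb2 : (0 : ℝ) < b / 2 := by linarith
  obtain ⟨c, hc, hkey⟩ := aux_key hb2 hm
  have hq1 : 1 ≤ m / (m - 1) := by
    rw [le_div_iff₀ (by linarith : (0:ℝ) < m - 1)]; linarith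
  set g : EuclideanSpace ℝ (Fin d) → ℝ :=
    fun y => Real.exp (-(b / 2) * ‖y‖ ^ (m / (m - 1))) with hgdef
  have hgint : Integrable g := aux_integrable d hb2 hq1
  set I : ℝ := ∫ y : EuclideanSpace ℝ (Fin d), g y with hIdef
  have hI0 : 0 ≤ I := integral_nonneg fun y => (Real.exp_pos _).le
  have hω' : (0 : ℝ) < max ω c + 1 := by
    have := le_max_right ω c; linarith
  refine ⟨a * (I + 1), by positivity, max ω c + 1, hω', fun t ht K hK ρ hρ => ?_⟩
  set R : ℝ := t ^ (-(1 / m)) with hRdef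
  have hR : 0 < R := Real.rpow_pos_of_pos ht _
  have hgR : ∀ x : EuclideanSpace ℝ (Fin d),
      g (R • x) = Real.exp (-(b / 2) * ((‖x‖ ^ m / t) ^ (1 / (m - 1)))) := by
    intro x
    have hn : ‖R • x‖ = ‖x‖ * R := by
      rw [norm_smul, Real.norm_eq_abs, abs_of_pos hR, mul_comm]
    rw [hgdef]
    simp only
    rw [hn, hRdef, aux_scale hm ht (norm_nonneg x)]
  have htp : (0 : ℝ) < t ^ (-(((d : ℝ) + k) / m)) := Real.rpow_pos_of_pos ht _
  set A : ℝ := a * t ^ (-(((d : ℝ) + k) / m)) * Real.exp (ω * t) *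
    Real.exp (c * ρ ^ m * t) with hAdef
  have hA0 : 0 < A :=
    mul_pos (mul_pos (mul_pos ha htp) (Real.exp_pos _)) (Real.exp_pos _)
  have hcomp : Integrable (fun x : EuclideanSpace ℝ (Fin d) => g (R • x)) :=
    hgint.comp_smul hR.ne'
  have hGint : Integrable (fun x : EuclideanSpace ℝ (Fin d) => A * g (R • x)) :=
    hcomp.const_mul A
  have hpt : ∀ x : EuclideanSpace ℝ (Fin d),
      ‖K x‖ * Real.exp (ρ * ‖x‖) ≤ A * g (R • x) := by
    intro x
    rw [hgR x]
    set S : ℝ := (‖x‖ ^ m / t) ^ (1 / (m - 1)) with hSdef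
    have hS0 : 0 ≤ S :=
      Real.rpow_nonneg (div_nonneg (Real.rpow_nonneg (norm_nonneg x) m) ht.le) _
    have hyx := hkey t ht ρ hρ ‖x‖ (norm_nonneg x)
    calc ‖K x‖ * Real.exp (ρ * ‖x‖)
        ≤ (a * t ^ (-(((d : ℝ) + k) / m)) * Real.exp (ω * t) * Real.exp (-b * S)) *
            Real.exp (ρ * ‖x‖) :=
          mul_le_mul_of_nonneg_right (hK x) (Real.exp_pos _).le
      _ = (a * t ^ (-(((d : ℝ) + k) / m)) * Real.exp (ω * t)) *
            Real.exp (-b * S + ρ * ‖x‖) := by rw [Real.exp_add]; ring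
      _ ≤ (a * t ^ (-(((d : ℝ) + k) / m)) * Real.exp (ω * t)) *
            Real.exp (c * ρ ^ m * t + -(b / 2) * S) := by
          apply mul_le_mul_of_nonneg_left _
            (mul_nonneg (mul_nonneg ha.le htp.le) (Real.exp_pos _).le)
          apply Real.exp_le_exp.2
          linarith
      _ = A * Real.exp (-(b / 2) * S) := by rw [hAdef, Real.exp_add]; ring
  have hRd : ((R ^ d : ℝ))⁻¹ = t ^ ((d : ℝ) / m) := by
    rw [hRdef, ← Real.rpow_natCast (t ^ (-(1 / m))) d, ← Real.rpow_mul ht.le,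
      ← Real.rpow_neg ht.le]
    congr 1
    ring
  have hcs : ∫ x : EuclideanSpace ℝ (Fin d), g (R • x) = t ^ ((d : ℝ) / m) * I := by
    rw [Measure.integral_comp_smul_of_nonneg volume g R (hR := hR.le),
      finrank_euclideanSpace_fin, smul_eq_mul, hRd, hIdef]
  have htk : (0 : ℝ) < t ^ (-(k / m)) := Real.rpow_pos_of_pos ht _
  have hts : t ^ (-(((d : ℝ) + k) / m)) * t ^ ((d : ℝ) / m) = t ^ (-(k / m)) := by
    rw [← Real.rpow_add ht]
    congr 1
    first
    | (field_simp; ring)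
    | field_simp
  have hee : ω * t + c * ρ ^ m * t ≤ (max ω c + 1) * (1 + ρ ^ m) * t := by
    have h1 : ω ≤ max ω c + 1 := by have := le_max_left ω c; linarith
    have h2 : c ≤ max ω c + 1 := by have := le_max_right ω c; linarith
    have hρm : (0 : ℝ) ≤ ρ ^ m := Real.rpow_nonneg hρ m
    nlinarith [mul_le_mul_of_nonneg_right h1 ht.le,
      mul_le_mul_of_nonneg_right h2 (mul_nonneg hρm ht.le)]
  have heq : A * (t ^ ((d : ℝ) / m) * I) =
      (a * I) * t ^ (-(k / m)) * Real.exp (ω * t + c * ρ ^ m * t) := by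
    rw [hAdef, ← hts, Real.exp_add]; ring
  calc ∫ x : EuclideanSpace ℝ (Fin d), ‖K x‖ * Real.exp (ρ * ‖x‖)
      ≤ ∫ x : EuclideanSpace ℝ (Fin d), A * g (R • x) :=
        integral_mono_of_nonneg
          (Filter.Eventually.of_forall fun x =>
            mul_nonneg (norm_nonneg _) (Real.exp_pos _).le)
          hGint (Filter.Eventually.of_forall hpt)
    _ = A * ∫ x : EuclideanSpace ℝ (Fin d), g (R • x) := integral_const_mul _ _
    _ = A * (t ^ ((d : ℝ) / m) * I) := by rw [hcs]
    _ = (a * I) * t ^ (-(k / m)) * Real.exp (ω * t + c * ρ ^ m * t) := heq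
    _ ≤ (a * (I + 1)) * t ^ (-(k / m)) * Real.exp (ω * t + c * ρ ^ m * t) := by
        apply mul_le_mul_of_nonneg_right _ (Real.exp_pos _).le
        apply mul_le_mul_of_nonneg_right _ htk.le
        nlinarith
    _ ≤ a * (I + 1) * t ^ (-(k / m)) *
          Real.exp ((max ω c + 1) * (1 + ρ ^ m) * t) := by
        apply mul_le_mul_of_nonneg_left (Real.exp_le_exp.2 hee)
          (mul_nonneg (mul_nonneg ha.le (by linarith)) htk.le)
end

section
/- Let K_t, t > 0, satisfy the convolution semigroup property K_{s+t} = K_s * K_t on ℝ^d with ∫ |K_t(y)| e^{ρ|y|} dy ≤ a e^{ω(1+ρ^m)t}, and let U be a strongly continuous representation of ℝ^d on a Banach space χ with ‖U(y)‖ ≤ M e^{ρ|y|}. Then the operators S_t φ = ∫_{ℝ^d} K_t(y) U(y) φ dy (weak integral) are well-defined bounded operators satisfying ‖S_t‖ ≤ a M e^{ω(1+ρ^m)t} and form a semigroup: S_s S_t = S_{s+t} for all s, t > 0. -/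
open MeasureTheory
open scoped ENNReal

theorem stmt12 {χ : Type*} [NormedAddCommGroup χ] [NormedSpace ℂ χ] [CompleteSpace χ]
    (d : ℕ) (m a ω ρ M : ℝ)
    (hm : 1 ≤ m) (ha : 0 < a) (hω : 0 ≤ ω) (hρ : 0 ≤ ρ) (hM : 1 ≤ M)
    (K : ℝ → EuclideanSpace ℝ (Fin d) → ℂ)
    (hKmeas : ∀ t > (0 : ℝ), Measurable (K t))
    -- convolution semigroup property
    (hKconv : ∀ s > (0 : ℝ), ∀ t > (0 : ℝ), ∀ x,
      K (s + t) x = ∫ z, K s z * K t (x - z))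
    -- weighted L¹ bound
    (hKint : ∀ t > (0 : ℝ),
      ∫⁻ y, (‖K t y‖₊ : ENNReal) * ENNReal.ofReal (Real.exp (ρ * ‖y‖)) ≤
        ENNReal.ofReal (a * Real.exp (ω * (1 + ρ ^ m) * t)))
    -- strongly continuous representation of ℝ^d with exponential growth
    (U : EuclideanSpace ℝ (Fin d) → χ →L[ℂ] χ)
    (hU0 : U 0 = ContinuousLinearMap.id ℂ χ)
    (hUadd : ∀ y z, U (y + z) = (U y).comp (U z))
    (hUcont : ∀ φ : χ, Continuous fun y => U y φ)
    (hUnorm : ∀ y, ‖U y‖ ≤ M * Real.exp (ρ * ‖y‖))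
    (S : ℝ → χ → χ)
    (hSdef : ∀ t > (0 : ℝ), ∀ φ, S t φ = ∫ y, K t y • U y φ) :
    (∀ t > (0 : ℝ), ∀ φ : χ, Integrable (fun y => K t y • U y φ)) ∧
    (∀ t > (0 : ℝ), ∀ φ : χ,
      ‖S t φ‖ ≤ a * M * Real.exp (ω * (1 + ρ ^ m) * t) * ‖φ‖) ∧
    (∀ s > (0 : ℝ), ∀ t > (0 : ℝ), ∀ φ : χ, S s (S t φ) = S (s + t) φ) := by
  have hexpmeas : Measurable fun y : EuclideanSpace ℝ (Fin d) => Real.exp (ρ * ‖y‖) :=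
    Real.measurable_exp.comp (measurable_norm.const_mul ρ)
  -- pointwise nnnorm identity
  have hnn : ∀ (t : ℝ) (y : EuclideanSpace ℝ (Fin d)),
      (‖(‖K t y‖ * Real.exp (ρ * ‖y‖))‖₊ : ℝ≥0∞) =
        (‖K t y‖₊ : ℝ≥0∞) * ENNReal.ofReal (Real.exp (ρ * ‖y‖)) := by
    intro t y
    rw [nnnorm_mul, ENNReal.coe_mul, nnnorm_norm,
      ← enorm_eq_nnnorm (Real.exp (ρ * ‖y‖)), Real.enorm_eq_ofReal (Real.exp_pos _).le]
  -- the weight function is integrable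
  have hKexp : ∀ t > (0 : ℝ),
      Integrable (fun y : EuclideanSpace ℝ (Fin d) => ‖K t y‖ * Real.exp (ρ * ‖y‖)) := by
    intro t ht
    have hmeas : Measurable fun y : EuclideanSpace ℝ (Fin d) => ‖K t y‖ * Real.exp (ρ * ‖y‖) :=
      (hKmeas t ht).norm.mul hexpmeas
    refine ⟨hmeas.aestronglyMeasurable, ?_⟩
    have : (∫⁻ y, (‖(‖K t y‖ * Real.exp (ρ * ‖y‖))‖₊ : ℝ≥0∞)) ≤
        ENNReal.ofReal (a * Real.exp (ω * (1 + ρ ^ m) * t)) := by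
      simp_rw [hnn t]
      exact hKint t ht
    exact lt_of_le_of_lt this ENNReal.ofReal_lt_top
  have hKexp_le : ∀ t > (0 : ℝ),
      (∫ y, ‖K t y‖ * Real.exp (ρ * ‖y‖)) ≤ a * Real.exp (ω * (1 + ρ ^ m) * t) := by
    intro t ht
    rw [integral_eq_lintegral_of_nonneg_ae
      (ae_of_all _ fun y => by positivity) (hKexp t ht).1]
    refine ENNReal.toReal_le_of_le_ofReal (by positivity) ?_
    have : ∀ y : EuclideanSpace ℝ (Fin d),
        ENNReal.ofReal (‖K t y‖ * Real.exp (ρ * ‖y‖)) =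
          (‖K t y‖₊ : ℝ≥0∞) * ENNReal.ofReal (Real.exp (ρ * ‖y‖)) := by
      intro y
      rw [← hnn t y, ← Real.enorm_eq_ofReal (by positivity), enorm_eq_nnnorm]
    simp_rw [this]
    exact hKint t ht
  -- integrability of the integrand
  have hUmeas : ∀ φ : χ, StronglyMeasurable fun y : EuclideanSpace ℝ (Fin d) => U y φ :=
    fun φ => (hUcont φ).stronglyMeasurable
  have hptw : ∀ (t : ℝ) (φ : χ) (y : EuclideanSpace ℝ (Fin d)),
      ‖K t y • U y φ‖ ≤ ‖K t y‖ * Real.exp (ρ * ‖y‖) * (M * ‖φ‖) := by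
    intro t φ y
    rw [norm_smul]
    have h1 : ‖U y φ‖ ≤ M * Real.exp (ρ * ‖y‖) * ‖φ‖ := by
      calc ‖U y φ‖ ≤ ‖U y‖ * ‖φ‖ := (U y).le_opNorm φ
        _ ≤ M * Real.exp (ρ * ‖y‖) * ‖φ‖ :=
          mul_le_mul_of_nonneg_right (hUnorm y) (norm_nonneg φ)
    calc ‖K t y‖ * ‖U y φ‖ ≤ ‖K t y‖ * (M * Real.exp (ρ * ‖y‖) * ‖φ‖) :=
          mul_le_mul_of_nonneg_left h1 (norm_nonneg _)
      _ = ‖K t y‖ * Real.exp (ρ * ‖y‖) * (M * ‖φ‖) := by ring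
  have hInt : ∀ t > (0 : ℝ), ∀ φ : χ, Integrable (fun y => K t y • U y φ) := by
    intro t ht φ
    refine Integrable.mono' ((hKexp t ht).mul_const (M * ‖φ‖)) ?_
      (ae_of_all _ fun y => hptw t φ y)
    exact ((hKmeas t ht).aemeasurable.aestronglyMeasurable).smul
      (hUmeas φ).aestronglyMeasurable
  refine ⟨hInt, ?_, ?_⟩
  · -- norm bound
    intro t ht φ
    rw [hSdef t ht φ]
    calc ‖∫ y, K t y • U y φ‖ ≤ ∫ y, ‖K t y‖ * Real.exp (ρ * ‖y‖) * (M * ‖φ‖) :=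
          norm_integral_le_of_norm_le ((hKexp t ht).mul_const (M * ‖φ‖))
            (ae_of_all _ fun y => hptw t φ y)
      _ = (∫ y, ‖K t y‖ * Real.exp (ρ * ‖y‖)) * (M * ‖φ‖) := integral_mul_const _ _
      _ ≤ a * Real.exp (ω * (1 + ρ ^ m) * t) * (M * ‖φ‖) := by
          have hMφ : (0 : ℝ) ≤ M * ‖φ‖ := by positivity
          exact mul_le_mul_of_nonneg_right (hKexp_le t ht) hMφ
      _ = a * M * Real.exp (ω * (1 + ρ ^ m) * t) * ‖φ‖ := by ring
  · -- semigroup property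
    intro s hs t ht φ
    have hst : (0 : ℝ) < s + t := by linarith
    -- step 1: rewrite S s (S t φ) as a double integral
    have hUyz : ∀ y z : EuclideanSpace ℝ (Fin d), ∀ ψ : χ, U y (U z ψ) = U (y + z) ψ := by
      intro y z ψ; rw [hUadd]; rfl
    have hsub : ∀ y : EuclideanSpace ℝ (Fin d),
        (∫ x, K t (x - y) • U x φ) = ∫ z, K t z • U (y + z) φ := by
      intro y
      have h := integral_sub_right_eq_self (μ := volume)
        (fun z => K t z • U (y + z) φ) y
      simpa using h
    have key1 : S s (S t φ) = ∫ y, ∫ x, (K s y * K t (x - y)) • U x φ := by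
      rw [hSdef s hs, hSdef t ht]
      refine integral_congr_ae (ae_of_all _ fun y => ?_)
      show K s y • (U y) (∫ z, K t z • U z φ) = ∫ x, (K s y * K t (x - y)) • U x φ
      rw [← ContinuousLinearMap.integral_comp_comm _ (hInt t ht φ)]
      have hmapeq : ∀ z, (U y) (K t z • U z φ) = K t z • U (y + z) φ := fun z => by
        rw [ContinuousLinearMap.map_smul, hUyz]
      simp_rw [hmapeq]
      rw [← hsub y, ← integral_smul]
      simp_rw [smul_smul]
    -- integrability on the product space
    have hm1 : Measurable fun p : EuclideanSpace ℝ (Fin d) × EuclideanSpace ℝ (Fin d) =>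
        K s p.1 * K t (p.2 - p.1) :=
      ((hKmeas s hs).comp measurable_fst).mul
        ((hKmeas t ht).comp (measurable_snd.sub measurable_fst))
    have hHmeas : AEStronglyMeasurable
        (fun p : EuclideanSpace ℝ (Fin d) × EuclideanSpace ℝ (Fin d) =>
          (K s p.1 * K t (p.2 - p.1)) • U p.2 φ) (volume.prod volume) :=
      hm1.aemeasurable.aestronglyMeasurable.smul
        ((hUmeas φ).comp_measurable measurable_snd).aestronglyMeasurable
    set A : EuclideanSpace ℝ (Fin d) → ℝ≥0∞ :=
      fun y => (‖K s y‖₊ : ℝ≥0∞) * ENNReal.ofReal (Real.exp (ρ * ‖y‖)) with hA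
    set B : EuclideanSpace ℝ (Fin d) → ℝ≥0∞ :=
      fun w => (‖K t w‖₊ : ℝ≥0∞) * ENNReal.ofReal (Real.exp (ρ * ‖w‖)) with hB
    have hAmeas : Measurable A := ((hKmeas s hs).nnnorm.coe_nnreal_ennreal).mul
      (hexpmeas.ennreal_ofReal)
    have hBmeas : Measurable B := ((hKmeas t ht).nnnorm.coe_nnreal_ennreal).mul
      (hexpmeas.ennreal_ofReal)
    set C : ℝ≥0∞ := ENNReal.ofReal (M * ‖φ‖) with hC
    have hptE : ∀ p : EuclideanSpace ℝ (Fin d) × EuclideanSpace ℝ (Fin d),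
        (‖(K s p.1 * K t (p.2 - p.1)) • U p.2 φ‖₊ : ℝ≥0∞) ≤ A p.1 * B (p.2 - p.1) * C := by
      rintro ⟨y, x⟩
      have hx : ‖x‖ ≤ ‖y‖ + ‖x - y‖ := by
        calc ‖x‖ = ‖y + (x - y)‖ := by rw [show y + (x - y) = x by abel]
          _ ≤ ‖y‖ + ‖x - y‖ := norm_add_le _ _
      have hUx : (‖U x φ‖₊ : ℝ≥0∞) ≤
          ENNReal.ofReal (Real.exp (ρ * ‖y‖)) * ENNReal.ofReal (Real.exp (ρ * ‖x - y‖)) * C := by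
        rw [← ENNReal.ofReal_mul (by positivity), ← ENNReal.ofReal_mul (by positivity),
          ← Real.exp_add, ← enorm_eq_nnnorm, ← ofReal_norm]
        refine ENNReal.ofReal_le_ofReal ?_
        calc ‖U x φ‖ ≤ M * Real.exp (ρ * ‖x‖) * ‖φ‖ := by
              calc ‖U x φ‖ ≤ ‖U x‖ * ‖φ‖ := (U x).le_opNorm φ
                _ ≤ M * Real.exp (ρ * ‖x‖) * ‖φ‖ :=
                  mul_le_mul_of_nonneg_right (hUnorm x) (norm_nonneg φ)
          _ ≤ Real.exp (ρ * ‖y‖ + ρ * ‖x - y‖) * (M * ‖φ‖) := by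
              have : Real.exp (ρ * ‖x‖) ≤ Real.exp (ρ * ‖y‖ + ρ * ‖x - y‖) := by
                apply Real.exp_le_exp.2
                nlinarith [mul_le_mul_of_nonneg_left hx hρ]
              calc M * Real.exp (ρ * ‖x‖) * ‖φ‖
                  = Real.exp (ρ * ‖x‖) * (M * ‖φ‖) := by ring
                _ ≤ Real.exp (ρ * ‖y‖ + ρ * ‖x - y‖) * (M * ‖φ‖) :=
                  mul_le_mul_of_nonneg_right this (by positivity)
      calc (‖(K s y * K t (x - y)) • U x φ‖₊ : ℝ≥0∞)
          = (‖K s y‖₊ : ℝ≥0∞) * (‖K t (x - y)‖₊ : ℝ≥0∞) * (‖U x φ‖₊ : ℝ≥0∞) := by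
            rw [nnnorm_smul, nnnorm_mul]; push_cast; ring
        _ ≤ (‖K s y‖₊ : ℝ≥0∞) * (‖K t (x - y)‖₊ : ℝ≥0∞) *
            (ENNReal.ofReal (Real.exp (ρ * ‖y‖)) * ENNReal.ofReal (Real.exp (ρ * ‖x - y‖)) * C) :=
            mul_le_mul_right hUx _
        _ = A y * B (x - y) * C := by rw [hA, hB]; ring
    have hHint : Integrable
        (fun p : EuclideanSpace ℝ (Fin d) × EuclideanSpace ℝ (Fin d) =>
          (K s p.1 * K t (p.2 - p.1)) • U p.2 φ) (volume.prod volume) := by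
      refine ⟨hHmeas, ?_⟩
      have hprodmeas : Measurable fun p : EuclideanSpace ℝ (Fin d) × EuclideanSpace ℝ (Fin d) =>
          A p.1 * B (p.2 - p.1) * C :=
        ((hAmeas.comp measurable_fst).mul
          (hBmeas.comp (measurable_snd.sub measurable_fst))).mul measurable_const
      have hAC_ne : ∀ y, A y * C ≠ ∞ := fun y =>
        ENNReal.mul_ne_top (ENNReal.mul_ne_top ENNReal.coe_ne_top ENNReal.ofReal_ne_top)
          ENNReal.ofReal_ne_top
      have hBint_ne : (∫⁻ w, B w) ≠ ∞ :=
        ne_top_of_le_ne_top ENNReal.ofReal_ne_top (hKint t ht)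
      calc (∫⁻ p, ‖(K s p.1 * K t (p.2 - p.1)) • U p.2 φ‖₊ ∂(volume.prod volume))
          ≤ ∫⁻ p, A p.1 * B (p.2 - p.1) * C ∂(volume.prod volume) := lintegral_mono hptE
        _ = ∫⁻ y, ∫⁻ x, A y * B (x - y) * C := lintegral_prod _ hprodmeas.aemeasurable
        _ = ∫⁻ y, (A y * C) * ∫⁻ x, B (x - y) := by
            refine lintegral_congr fun y => ?_
            rw [← lintegral_const_mul' _ _ (hAC_ne y)]
            refine lintegral_congr fun x => ?_
            ring
        _ = ∫⁻ y, (A y * C) * ∫⁻ w, B w := by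
            refine lintegral_congr fun y => ?_
            rw [lintegral_sub_right_eq_self B y]
        _ = (∫⁻ y, A y) * C * ∫⁻ w, B w := by
            rw [lintegral_mul_const' _ _ hBint_ne, lintegral_mul_const' _ _ ENNReal.ofReal_ne_top]
        _ < ∞ := by
            refine ENNReal.mul_lt_top (ENNReal.mul_lt_top ?_ ENNReal.ofReal_lt_top) ?_
            · exact lt_of_le_of_lt (hKint s hs) ENNReal.ofReal_lt_top
            · exact lt_of_le_of_lt (hKint t ht) ENNReal.ofReal_lt_top
    -- Fubini and convolution identity
    have hswap : (∫ y, ∫ x, (K s y * K t (x - y)) • U x φ) =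
        ∫ x, ∫ y, (K s y * K t (x - y)) • U x φ :=
      integral_integral_swap hHint
    rw [key1, hswap, hSdef (s + t) hst φ]
    refine integral_congr_ae (ae_of_all _ fun x => ?_)
    show (∫ y, (K s y * K t (x - y)) • U x φ) = K (s + t) x • U x φ
    rw [hKconv s hs t ht x, integral_smul_const]
end
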